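/- Let Z = (Z_1,…,Z_d) be a strict row contraction of n×n complex matrices and let y, v ∈ ℂⁿ. Define k : 𝔽^d → ℂ by k(α) := ⟪Z^α v, y⟫ (Euclidean inner product on ℂⁿ, conjugate-linear in the first argument). Then k ∈ F²_d (i.e. Memℓp k 2), and for every f ∈ F²_d the reproducing formula ⟪k, f⟫_{F²_d} = ⟪y, f(Z) v⟫_{ℂⁿ} holds, where f(Z) := ∑'_α f(α) • Z^α. -/

import Mathlib

noncomputable section

open scoped ComplexConjugate
open Matrix
open scoped ComplexOrder

abbrev Word (d : ℕ) := FreeMonoid (Fin d)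

instance {d : ℕ} : DecidableEq (Word d) :=
  fun a b => decidable_of_iff (FreeMonoid.toList a = FreeMonoid.toList b)
    FreeMonoid.toList.injective.eq_iff

abbrev Fock (d : ℕ) := lp (fun _ : Word d => ℂ) 2

abbrev fockBasis (d : ℕ) (α : Word d) : Fock d := lp.single 2 α (1 : ℂ)

/-- Product of the matrices `Z i` along the word `α`. -/
def wordProdM {d : ℕ} {n : Type} [Fintype n] [DecidableEq n]
    (Z : Fin d → Matrix n n ℂ) (α : Word d) : Matrix n n ℂ :=
  (α.toList.map Z).prod

/-- Evaluation of a power series with coefficients `c` at the matrix tuple `Z`. -/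
def evalM {d : ℕ} {n : Type} [Fintype n] [DecidableEq n]
    (c : Word d → ℂ) (Z : Fin d → Matrix n n ℂ) : Matrix n n ℂ :=
  ∑' α : Word d, c α • wordProdM Z α

def IsStrictRowContraction {d : ℕ} {n : Type} [Fintype n] [DecidableEq n]
    (Z : Fin d → Matrix n n ℂ) : Prop :=
  (1 - ∑ i, Z i * (Z i)ᴴ).PosDef

abbrev L2N := lp (fun _ : ℕ => ℂ) 2

def wordProdO {d : ℕ} (Z : Fin d → (L2N →L[ℂ] L2N)) (α : Word d) : L2N →L[ℂ] L2N :=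
  (α.toList.map Z).prod

def evalO {d : ℕ} (c : Word d → ℂ) (Z : Fin d → (L2N →L[ℂ] L2N)) : L2N →L[ℂ] L2N :=
  ∑' α : Word d, c α • wordProdO Z α

def IsStrictRowContractionO {d : ℕ} (Z : Fin d → (L2N →L[ℂ] L2N)) : Prop :=
  ∃ r : ℝ, r < 1 ∧
    ((r ^ 2 : ℂ) • (1 : L2N →L[ℂ] L2N)
      - ∑ i, Z i ∘L ContinuousLinearMap.adjoint (Z i)).IsPositive

/-- The singularity space `𝒮(f)`. -/
def SingSpace {d : ℕ} (f : Word d → ℂ) : Set (Fock d) :=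
  {h | (∀ (n : ℕ) (Z : Fin d → Matrix (Fin n) (Fin n) ℂ) (y : Fin n → ℂ),
          IsStrictRowContraction Z → (evalM f Z)ᴴ *ᵥ y = 0 → (evalM (h ·) Z)ᴴ *ᵥ y = 0) ∧
       (∀ (Z : Fin d → (L2N →L[ℂ] L2N)) (y : L2N),
          IsStrictRowContractionO Z → ContinuousLinearMap.adjoint (evalO f Z) y = 0 →
          ContinuousLinearMap.adjoint (evalO (h ·) Z) y = 0)}

def wordOp {d : ℕ} (R : Fin d → (Fock d →L[ℂ] Fock d)) (α : Word d) :
    Fock d →L[ℂ] Fock d :=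
  (α.toList.map R).prod

/-- `f` is cyclic for the right creation operators. -/
def IsNCOuter {d : ℕ} (R : Fin d → (Fock d →L[ℂ] Fock d)) (f : Fock d) : Prop :=
  (Submodule.span ℂ {g : Fock d | ∃ α : Word d, g = wordOp R α f}).topologicalClosure = ⊤

def IsNCInner {d : ℕ} (R : Fin d → (Fock d →L[ℂ] Fock d))
    (Θ : Fock d →L[ℂ] Fock d) : Prop :=
  (∀ x, ‖Θ x‖ = ‖x‖) ∧ ∀ i, Θ ∘L R i = R i ∘L Θ

namespace SzegoAux

def sqn {n : ℕ} (x : Fin n → ℂ) : ℝ := ∑ j, ‖x j‖ ^ 2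

lemma sqn_nonneg {n : ℕ} (x : Fin n → ℂ) : 0 ≤ sqn x :=
  Finset.sum_nonneg fun _ _ => by positivity

lemma star_dotProduct_self {n : ℕ} (x : Fin n → ℂ) :
    dotProduct (star x) x = (sqn x : ℂ) := by
  simp only [dotProduct, Pi.star_apply, RCLike.star_def, RCLike.conj_mul, sqn]
  push_cast
  rfl

lemma sqn_smul {n : ℕ} (c : ℂ) (x : Fin n → ℂ) : sqn (c • x) = ‖c‖ ^ 2 * sqn x := by
  simp [sqn, norm_smul, mul_pow, Finset.mul_sum]

lemma dot_shift {n : ℕ} (A : Matrix (Fin n) (Fin n) ℂ) (x w : Fin n → ℂ) :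
    dotProduct (star x) (A *ᵥ w) = dotProduct (star (Aᴴ *ᵥ x)) w := by
  rw [Matrix.dotProduct_mulVec, Matrix.star_mulVec, Matrix.conjTranspose_conjTranspose]

/-- quadratic form of `M ↦ star x ⬝ᵥ M *ᵥ v` as an additive hom -/
def dotHom {n : ℕ} (y v : Fin n → ℂ) : Matrix (Fin n) (Fin n) ℂ →+ ℂ where
  toFun M := dotProduct (star y) (M *ᵥ v)
  map_zero' := by simp
  map_add' M N := by simp [Matrix.add_mulVec, dotProduct_add]

lemma quad_sum {d n : ℕ} (Z : Fin d → Matrix (Fin n) (Fin n) ℂ) (x : Fin n → ℂ) :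
    dotProduct (star x) ((∑ i, Z i * (Z i)ᴴ) *ᵥ x)
      = ((∑ i, sqn ((Z i)ᴴ *ᵥ x) : ℝ) : ℂ) := by
  have := map_sum (dotHom x x) (fun i => Z i * (Z i)ᴴ) Finset.univ
  simp only [dotHom, AddMonoidHom.coe_mk, ZeroHom.coe_mk] at this
  rw [this]
  push_cast
  refine Finset.sum_congr rfl fun i _ => ?_
  rw [← Matrix.mulVec_mulVec, dot_shift, star_dotProduct_self]

lemma strict_bound {d n : ℕ} {Z : Fin d → Matrix (Fin n) (Fin n) ℂ}
    (hZ : (1 - ∑ i, Z i * (Z i)ᴴ).PosDef) {x : Fin n → ℂ} (hx : x ≠ 0) :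
    ∑ i, sqn ((Z i)ᴴ *ᵥ x) < sqn x := by
  have h := hZ.dotProduct_mulVec_pos hx
  rw [Matrix.sub_mulVec, dotProduct_sub, Matrix.one_mulVec,
    star_dotProduct_self, quad_sum] at h
  rw [← Complex.ofReal_sub] at h
  rw [Complex.zero_lt_real] at h
  linarith



lemma exists_r {d n : ℕ} {Z : Fin d → Matrix (Fin n) (Fin n) ℂ}
    (hZ : (1 - ∑ i, Z i * (Z i)ᴴ).PosDef) :
    ∃ r : ℝ, 0 ≤ r ∧ r < 1 ∧ ∀ x : Fin n → ℂ, ∑ i, sqn ((Z i)ᴴ *ᵥ x) ≤ r * sqn x := by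
  rcases Nat.eq_zero_or_pos n with hn | hn
  · refine ⟨0, le_refl _, one_pos, fun x => ?_⟩
    subst hn
    have hx : ∀ u : Fin 0 → ℂ, sqn u = 0 := fun u => by simp [sqn]
    simp [hx]
  · set E := EuclideanSpace ℂ (Fin n)
    set ψ : E → ℝ := fun x => ∑ i, sqn ((Z i)ᴴ *ᵥ (WithLp.equiv 2 (Fin n → ℂ) x)) with hψdef
    have hψc : Continuous ψ := by
      apply continuous_finset_sum
      intro i _
      simp only [sqn]
      apply continuous_finset_sum
      intro j _
      have h1 : Continuous fun x : E => ((Z i)ᴴ *ᵥ (WithLp.equiv 2 (Fin n → ℂ) x)) j := by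
        simp only [Matrix.mulVec, dotProduct]
        exact continuous_finset_sum _ fun k _ =>
          (continuous_const.mul ((EuclideanSpace.proj k).continuous))
      exact (h1.norm).pow 2
    have hne : (Metric.sphere (0 : E) 1).Nonempty := by
      refine ⟨EuclideanSpace.single ⟨0, hn⟩ (1 : ℂ), ?_⟩
      rw [Metric.mem_sphere, dist_zero_right, EuclideanSpace.norm_single]
      norm_num
    obtain ⟨x0, hx0S, hmax⟩ :=
      (isCompact_sphere (0 : E) 1).exists_isMaxOn hne hψc.continuousOn
    rw [Metric.mem_sphere, dist_zero_right] at hx0S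
    set r : ℝ := ψ x0 with hrdef
    have hr0 : 0 ≤ r := Finset.sum_nonneg fun _ _ => sqn_nonneg _
    have hsqn_norm : ∀ x : E, sqn (WithLp.equiv 2 (Fin n → ℂ) x) = ‖x‖ ^ 2 := by
      intro x
      rw [EuclideanSpace.norm_eq, Real.sq_sqrt (Finset.sum_nonneg fun _ _ => by positivity)]
      rfl
    have hr1 : r < 1 := by
      have hx0ne : (WithLp.equiv 2 (Fin n → ℂ) x0) ≠ 0 := by
        intro h
        apply_fun (WithLp.equiv 2 (Fin n → ℂ)).symm at h
        simp only [Equiv.symm_apply_apply] at h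
        rw [h] at hx0S
        simp at hx0S
      have := strict_bound hZ hx0ne
      rw [hsqn_norm x0, hx0S] at this
      simpa [hrdef, hψdef] using this
    refine ⟨r, hr0, hr1, fun x => ?_⟩
    rcases eq_or_ne x 0 with rfl | hx
    · simp [sqn, Matrix.mulVec_zero]
    · set xE : E := (WithLp.equiv 2 (Fin n → ℂ)).symm x with hxE
      have hxEne : xE ≠ 0 := by
        simp only [hxE, ne_eq, EmbeddingLike.map_eq_zero_iff]
        intro h; apply hx
        have := congrArg (WithLp.equiv 2 (Fin n → ℂ)) h
        simpa using this
      set t : ℝ := ‖xE‖ with ht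
      have ht0 : 0 < t := norm_pos_iff.2 hxEne
      set u : E := ((t : ℂ)⁻¹) • xE with hu
      have huS : u ∈ Metric.sphere (0 : E) 1 := by
        simp only [Metric.mem_sphere, dist_zero_right, hu, norm_smul]
        rw [norm_inv, Complex.norm_real, Real.norm_of_nonneg ht0.le]
        field_simp
        exact ht.symm
      have hmaxu := hmax huS
      have huv : (WithLp.equiv 2 (Fin n → ℂ) u) = ((t : ℂ)⁻¹) • x := by
        rw [hu, hxE]
        simp
        rfl
      have hψu : ψ u = t⁻¹ ^ 2 * ∑ i, sqn ((Z i)ᴴ *ᵥ x) := by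
        rw [hψdef]
        simp only [huv, Matrix.mulVec_smul, sqn_smul]
        rw [← Finset.mul_sum]
        congr 1
        rw [norm_inv, Complex.norm_real, Real.norm_of_nonneg ht0.le, inv_pow]
      have hsx : sqn x = t ^ 2 := by
        have := hsqn_norm xE
        rw [hxE] at this
        simpa [ht, hxE] using this
      have h2 : t⁻¹ ^ 2 * ∑ i, sqn ((Z i)ᴴ *ᵥ x) ≤ r := by
        have : ψ u ≤ r := hmaxu
        rwa [hψu] at this
      rw [hsx]
      have ht2 : (0:ℝ) < t ^ 2 := by positivity
      rw [inv_pow] at h2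
      calc (∑ i, sqn ((Z i)ᴴ *ᵥ x)) = (t ^ 2) * ((t ^ 2)⁻¹ * ∑ i, sqn ((Z i)ᴴ *ᵥ x)) := by
            field_simp
        _ ≤ (t ^ 2) * r := mul_le_mul_of_nonneg_left h2 ht2.le
        _ = r * t ^ 2 := mul_comm _ _


lemma wordProdM_nil {d n : ℕ} (Z : Fin d → Matrix (Fin n) (Fin n) ℂ) :
    wordProdM Z (FreeMonoid.ofList []) = 1 := by
  simp [wordProdM, FreeMonoid.toList_ofList]

lemma wordProdM_cons {d n : ℕ} (Z : Fin d → Matrix (Fin n) (Fin n) ℂ) (i : Fin d)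
    (l : List (Fin d)) :
    wordProdM Z (FreeMonoid.ofList (i :: l)) = Z i * wordProdM Z (FreeMonoid.ofList l) := by
  simp [wordProdM, FreeMonoid.toList_ofList]

lemma level_bound {d n : ℕ} {Z : Fin d → Matrix (Fin n) (Fin n) ℂ} {r : ℝ}
    (hr0 : 0 ≤ r)
    (hstep : ∀ x : Fin n → ℂ, ∑ i, sqn ((Z i)ᴴ *ᵥ x) ≤ r * sqn x) :
    ∀ (m : ℕ) (x : Fin n → ℂ),
      ∑ w : Fin m → Fin d,
        sqn ((wordProdM Z (FreeMonoid.ofList (List.ofFn w)))ᴴ *ᵥ x) ≤ r ^ m * sqn x := by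
  intro m
  induction m with
  | zero =>
    intro x
    rw [Finset.sum_eq_single_of_mem (fun i => Fin.elim0 i) (Finset.mem_univ _)
      (fun b _ hb => absurd (Subsingleton.elim b _) hb)]
    simp [wordProdM, FreeMonoid.toList_one]
  | succ m ih =>
    intro x
    rw [← (Fin.consEquiv (fun _ : Fin (m+1) => Fin d)).sum_comp
      (fun w => sqn ((wordProdM Z (FreeMonoid.ofList (List.ofFn w)))ᴴ *ᵥ x))]
    rw [Fintype.sum_prod_type]
    have key : ∀ (i : Fin d) (w : Fin m → Fin d),
        (wordProdM Z (FreeMonoid.ofList (List.ofFn (Fin.consEquiv _ (i, w)))))ᴴ *ᵥ x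
          = (wordProdM Z (FreeMonoid.ofList (List.ofFn w)))ᴴ *ᵥ ((Z i)ᴴ *ᵥ x) := by
      intro i w
      have : List.ofFn (Fin.consEquiv (fun _ : Fin (m+1) => Fin d) (i, w))
          = i :: List.ofFn w := by
        rw [List.ofFn_succ]
        simp [Fin.consEquiv]
      rw [this, wordProdM_cons, Matrix.conjTranspose_mul, ← Matrix.mulVec_mulVec]
    calc ∑ i, ∑ w : Fin m → Fin d,
          sqn ((wordProdM Z (FreeMonoid.ofList (List.ofFn (Fin.consEquiv _ (i, w)))))ᴴ *ᵥ x)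
        = ∑ i, ∑ w : Fin m → Fin d,
          sqn ((wordProdM Z (FreeMonoid.ofList (List.ofFn w)))ᴴ *ᵥ ((Z i)ᴴ *ᵥ x)) := by
          refine Finset.sum_congr rfl fun i _ => Finset.sum_congr rfl fun w _ => ?_
          rw [key]
      _ ≤ ∑ i, r ^ m * sqn ((Z i)ᴴ *ᵥ x) := Finset.sum_le_sum fun i _ => ih _
      _ = r ^ m * ∑ i, sqn ((Z i)ᴴ *ᵥ x) := by rw [Finset.mul_sum]
      _ ≤ r ^ m * (r * sqn x) := by
          exact mul_le_mul_of_nonneg_left (hstep x) (by positivity)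
      _ = r ^ (m+1) * sqn x := by ring

/-- summability of the squared norms over all words -/
lemma summable_sqn {d n : ℕ} {Z : Fin d → Matrix (Fin n) (Fin n) ℂ} {r : ℝ}
    (hr0 : 0 ≤ r) (hr1 : r < 1)
    (hstep : ∀ x : Fin n → ℂ, ∑ i, sqn ((Z i)ᴴ *ᵥ x) ≤ r * sqn x)
    (y : Fin n → ℂ) :
    Summable (fun α : Word d => sqn ((wordProdM Z α)ᴴ *ᵥ y)) := by
  set e : Word d ≃ (Σ m, Fin m → Fin d) :=
    FreeMonoid.toList.trans List.equivSigmaTuple with he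
  set g : (Σ m, Fin m → Fin d) → ℝ :=
    fun p => sqn ((wordProdM Z (FreeMonoid.ofList (List.ofFn p.2)))ᴴ *ᵥ y) with hg
  have hge : ∀ α : Word d, g (e α) = sqn ((wordProdM Z α)ᴴ *ᵥ y) := by
    intro α
    have h1 : e α = ⟨(FreeMonoid.toList α).length, (FreeMonoid.toList α).get⟩ := rfl
    rw [h1, hg]
    simp only [List.ofFn_get, FreeMonoid.ofList_toList]
  have hsg : Summable g := by
    have hnn : ∀ p : (Σ m, Fin m → Fin d), 0 ≤ g p := fun p => sqn_nonneg _
    rw [summable_sigma_of_nonneg hnn]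
    constructor
    · intro m
      exact Summable.of_finite
    · apply Summable.of_nonneg_of_le
        (fun m => tsum_nonneg fun w => sqn_nonneg _)
        (fun m => ?_)
        (((summable_geometric_of_lt_one hr0 hr1).mul_right (sqn y)))
      rw [tsum_fintype]
      exact level_bound hr0 hstep m y
  have h2 : Summable (g ∘ e) := (Equiv.summable_iff e).2 hsg
  exact h2.congr hge



lemma norm_star_dot_le {n : ℕ} (a b : Fin n → ℂ) :
    ‖dotProduct (star a) b‖ ^ 2 ≤ sqn a * sqn b := by
  set aE := (WithLp.equiv 2 (Fin n → ℂ)).symm a with ha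
  set bE := (WithLp.equiv 2 (Fin n → ℂ)).symm b with hb
  have hinner : (inner ℂ aE bE : ℂ) = dotProduct (star a) b := by
    rw [PiLp.inner_apply]
    simp [dotProduct, RCLike.inner_apply, ha, hb]
    exact Finset.sum_congr rfl fun _ _ => mul_comm _ _
  have hCS := norm_inner_le_norm (𝕜 := ℂ) aE bE
  have hna : ‖aE‖ ^ 2 = sqn a := by
    rw [EuclideanSpace.norm_eq, Real.sq_sqrt (Finset.sum_nonneg fun _ _ => by positivity)]
    rfl
  have hnb : ‖bE‖ ^ 2 = sqn b := by
    rw [EuclideanSpace.norm_eq, Real.sq_sqrt (Finset.sum_nonneg fun _ _ => by positivity)]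
    rfl
  calc ‖dotProduct (star a) b‖ ^ 2 = ‖(inner ℂ aE bE : ℂ)‖ ^ 2 := by rw [hinner]
    _ ≤ (‖aE‖ * ‖bE‖) ^ 2 := by
        apply pow_le_pow_left₀ (norm_nonneg _) hCS
    _ = sqn a * sqn b := by rw [mul_pow, hna, hnb]

end SzegoAux

open SzegoAux

/-- **NC Szegő kernel vectors and the reproducing formula.**
For a strict row contraction `Z` and vectors `y, v ∈ ℂⁿ`, the coefficient sequence
`k(α) = ⟪Z^α v, y⟫` is square-summable and `⟪k, f⟫ = ⟪y, f(Z) v⟫` for every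
`f ∈ F²_d`. -/
theorem szego_kernel_reproducing {d n : ℕ}
    (Z : Fin d → Matrix (Fin n) (Fin n) ℂ) (hZ : IsStrictRowContraction Z)
    (y v : Fin n → ℂ) :
    ∃ hk : (fun α : Word d => dotProduct (star (wordProdM Z α *ᵥ v)) y) ∈
        lp (fun _ : Word d => ℂ) 2,
      ∀ f : Fock d,
        (inner ℂ (⟨_, hk⟩ : Fock d) f : ℂ)
          = dotProduct (star y) (evalM (f ·) Z *ᵥ v) := by
  classical
  obtain ⟨r, hr0, hr1, hstep⟩ := exists_r hZ
  have hsq : ∀ w : Fin n → ℂ, Summable (fun α : Word d => sqn ((wordProdM Z α)ᴴ *ᵥ w)) :=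
    fun w => summable_sqn hr0 hr1 hstep w
  set k : Word d → ℂ := fun α => dotProduct (star (wordProdM Z α *ᵥ v)) y with hk
  have hk' : ∀ α, k α = dotProduct (star v) ((wordProdM Z α)ᴴ *ᵥ y) := by
    intro α
    rw [hk]
    simp only []
    rw [Matrix.star_mulVec, ← Matrix.dotProduct_mulVec]
  have hknorm : ∀ α, ‖k α‖ ^ 2 ≤ sqn v * sqn ((wordProdM Z α)ᴴ *ᵥ y) := fun α => by
    rw [hk' α]; exact norm_star_dot_le _ _
  have hsumk : Summable (fun α : Word d => ‖k α‖ ^ 2) :=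
    Summable.of_nonneg_of_le (fun α => by positivity) hknorm ((hsq y).mul_left (sqn v))
  have hrpow : ∀ g : Word d → ℂ, (fun α => ‖g α‖ ^ ((2 : ENNReal).toReal))
      = fun α => ‖g α‖ ^ 2 := by
    intro g
    funext α
    rw [show ((2 : ENNReal).toReal) = ((2 : ℕ) : ℝ) by simp, Real.rpow_natCast]
  have hmem : Memℓp k 2 := by
    apply memℓp_gen
    rw [hrpow]
    exact hsumk
  refine ⟨hmem, ?_⟩
  intro f
  have hf2 : Summable (fun α : Word d => ‖f α‖ ^ 2) := by
    have := (memℓp_gen_iff (p := 2) (by norm_num)).1 (lp.memℓp f)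
    rwa [hrpow] at this
  have hentry : ∀ i j : Fin n, Summable (fun α : Word d => ‖wordProdM Z α i j‖ ^ 2) := by
    intro i j
    apply Summable.of_nonneg_of_le (fun α => by positivity) ?_ (hsq (Pi.single i 1))
    intro α
    have h1 : ((wordProdM Z α)ᴴ *ᵥ Pi.single i 1) = fun j' => (wordProdM Z α)ᴴ j' i := by
      rw [Matrix.mulVec_single]
      funext j'
      simp
    rw [sqn, h1]
    have h2 : ‖wordProdM Z α i j‖ ^ 2 = ‖(wordProdM Z α)ᴴ j i‖ ^ 2 := by
      rw [Matrix.conjTranspose_apply, norm_star]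
    rw [h2]
    exact Finset.single_le_sum (f := fun j' => ‖(wordProdM Z α)ᴴ j' i‖ ^ 2)
      (fun _ _ => by positivity) (Finset.mem_univ j)
  have hp : ∀ i j : Fin n, Summable (fun α : Word d => f α * wordProdM Z α i j) := by
    intro i j
    have hb : Summable (fun α : Word d => (‖f α‖ ^ 2 + ‖wordProdM Z α i j‖ ^ 2) / 2) :=
      (hf2.add (hentry i j)).div_const 2
    have hn : Summable (fun α : Word d => ‖f α * wordProdM Z α i j‖) := by
      refine Summable.of_nonneg_of_le (fun α => norm_nonneg _) (fun α => ?_) hb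
      rw [norm_mul]
      nlinarith [sq_nonneg (‖f α‖ - ‖wordProdM Z α i j‖), norm_nonneg (f α),
        norm_nonneg (wordProdM Z α i j)]
    exact hn.of_norm
  have hmsum : Summable (fun α : Word d => f α • wordProdM Z α) := by
    have h1 : Summable (fun α : Word d => (fun i j => f α * wordProdM Z α i j :
        Matrix (Fin n) (Fin n) ℂ)) := by
      apply Pi.summable.2
      intro i
      apply Pi.summable.2
      intro j
      exact hp i j
    refine h1.congr fun α => ?_
    funext i j
    simp [Matrix.smul_apply]
  have hHasSum : HasSum (fun α : Word d => f α • wordProdM Z α) (evalM (f ·) Z) :=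
    hmsum.hasSum
  let L₀ : Matrix (Fin n) (Fin n) ℂ →ₗ[ℂ] ℂ :=
    { toFun := fun M => dotProduct (star y) (M *ᵥ v)
      map_add' := fun M N => by simp [Matrix.add_mulVec, dotProduct_add]
      map_smul' := fun c M => by
        simp [Matrix.smul_mulVec, dotProduct_smul, smul_eq_mul] }
  let L : Matrix (Fin n) (Fin n) ℂ →L[ℂ] ℂ := ⟨L₀, L₀.continuous_of_finiteDimensional⟩
  have h2 : HasSum (fun α : Word d => L (f α • wordProdM Z α)) (L (evalM (f ·) Z)) :=
    hHasSum.mapL L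
  have hconj : ∀ α : Word d, (starRingEnd ℂ) (k α)
      = dotProduct (star y) (wordProdM Z α *ᵥ v) := by
    intro α
    rw [hk]
    simp only [dotProduct, Pi.star_apply, map_sum]
    refine Finset.sum_congr rfl fun j _ => ?_
    simp only [_root_.map_mul, Complex.conj_conj, RCLike.star_def]
    ring
  calc (inner ℂ (⟨k, hmem⟩ : Fock d) f : ℂ)
      = ∑' α : Word d, (starRingEnd ℂ) (k α) * f α := by
        rw [lp.inner_eq_tsum]
        exact tsum_congr fun α => by rw [RCLike.inner_apply, mul_comm]
    _ = ∑' α : Word d, L (f α • wordProdM Z α) := by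
        refine tsum_congr fun α => ?_
        rw [hconj α]
        show _ = dotProduct (star y) ((f α • wordProdM Z α) *ᵥ v)
        rw [Matrix.smul_mulVec, dotProduct_smul, smul_eq_mul]
        ring
    _ = L (evalM (f ·) Z) := h2.tsum_eq
    _ = dotProduct (star y) (evalM (f ·) Z *ᵥ v) := rfl
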